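/- Let (û, ŵ, v̂, ẑ) be a fixed point of the GBPDNA iteration and let (uⁿ, wⁿ, vⁿ, zⁿ)_{n≥0} be generated by the iteration from any starting point. Let L and B be invertible linear maps with LᵀL = I − KᵀK and BᵀB = I − AAᵀ. Then for every M ≥ 0 the series Σ_{n=M}^{∞} ( ‖L(u^{n+1} − uⁿ)‖² + ‖B(w^{n+1} − wⁿ)‖² + ‖ẑ − zⁿ − K(û − u^{n+1})‖² ) is bounded above by ‖L(u^M − û)‖² + ‖B(w^M − ŵ)‖² + θ⁻¹‖v^M − v̂‖² + ‖z^M − ẑ‖². -/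

import Mathlib

open scoped RealInnerProductSpace
open Filter Topology

/-- Componentwise projection `P_λ` on `(ℝ^d)^p`. -/
noncomputable def Pproj {d p : ℕ} (lam : ℝ)
    (w : PiLp 2 (fun _ : Fin p => EuclideanSpace ℝ (Fin d))) :
    PiLp 2 (fun _ : Fin p => EuclideanSpace ℝ (Fin d)) :=
  WithLp.toLp 2 (fun i => if lam < ‖w i‖ then (lam / ‖w i‖) • w i else w i)

/-- Projection onto the closed `ℓ₂`-ball of radius `ε` centered at `y`. -/
noncomputable def Qproj {m : ℕ} (y : EuclideanSpace ℝ (Fin m)) (eps : ℝ)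
    (v : EuclideanSpace ℝ (Fin m)) : EuclideanSpace ℝ (Fin m) :=
  if eps < ‖v - y‖ then y + (eps / ‖v - y‖) • (v - y) else v

section Aux

variable {N m p d : ℕ}
local notation "U" => EuclideanSpace ℝ (Fin N)
local notation "V" => EuclideanSpace ℝ (Fin m)
local notation "W" => PiLp 2 (fun _ : Fin p => EuclideanSpace ℝ (Fin d))

lemma Qproj_mem (y : EuclideanSpace ℝ (Fin m)) {eps : ℝ} (heps : 0 ≤ eps)
    (x : EuclideanSpace ℝ (Fin m)) : ‖Qproj y eps x - y‖ ≤ eps := by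
  unfold Qproj
  split_ifs with h
  · have hr : 0 < ‖x - y‖ := heps.trans_lt h
    have : y + (eps / ‖x - y‖) • (x - y) - y = (eps / ‖x - y‖) • (x - y) := by abel
    rw [this, norm_smul]
    rw [Real.norm_eq_abs, abs_of_nonneg (by positivity)]
    field_simp; exact le_rfl
  · linarith [not_lt.mp h]

lemma Qproj_inner (y : EuclideanSpace ℝ (Fin m)) {eps : ℝ} (heps : 0 ≤ eps)
    (x q : EuclideanSpace ℝ (Fin m)) (hq : ‖q - y‖ ≤ eps) :
    ⟪x - Qproj y eps x, q - Qproj y eps x⟫ ≤ 0 := by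
  unfold Qproj
  split_ifs with h
  · set r := ‖x - y‖ with hrdef
    have hr : 0 < r := heps.trans_lt h
    have h1 : x - (y + (eps / r) • (x - y)) = (1 - eps / r) • (x - y) := by
      rw [sub_smul, one_smul]; abel
    have h2 : q - (y + (eps / r) • (x - y)) = (q - y) - (eps / r) • (x - y) := by abel
    rw [h1, h2, real_inner_smul_left, inner_sub_right, real_inner_smul_right,
      real_inner_self_eq_norm_sq]
    have hcs : ⟪x - y, q - y⟫ ≤ r * eps := by
      calc ⟪x - y, q - y⟫ ≤ ‖x - y‖ * ‖q - y‖ := real_inner_le_norm _ _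
        _ ≤ r * eps := by apply mul_le_mul_of_nonneg_left hq hr.le
    have hc2 : (eps / r) * r ^ 2 = eps * r := by field_simp
    rw [hc2]
    apply mul_nonpos_of_nonneg_of_nonpos
    · have : eps / r < 1 := (div_lt_one hr).2 h
      linarith
    · linarith
  · simp

lemma Qproj_firm (y : EuclideanSpace ℝ (Fin m)) {eps : ℝ} (heps : 0 ≤ eps)
    (x x' : EuclideanSpace ℝ (Fin m)) :
    ⟪Qproj y eps x - Qproj y eps x', Qproj y eps x - Qproj y eps x'⟫ ≤
      ⟪Qproj y eps x - Qproj y eps x', x - x'⟫ := by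
  have h1 := Qproj_inner y heps x (Qproj y eps x') (Qproj_mem y heps x')
  have h2 := Qproj_inner y heps x' (Qproj y eps x) (Qproj_mem y heps x)
  set P := Qproj y eps x
  set P' := Qproj y eps x'
  have e1 : ⟪x - P, P' - P⟫ = ⟪x, P'⟫ - ⟪x, P⟫ - ⟪P, P'⟫ + ⟪P, P⟫ := by
    simp [inner_sub_left, inner_sub_right]; ring
  have e2 : ⟪x' - P', P - P'⟫ = ⟪x', P⟫ - ⟪x', P'⟫ - ⟪P', P⟫ + ⟪P', P'⟫ := by
    simp [inner_sub_left, inner_sub_right]; ring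
  have e3 : ⟪P - P', P - P'⟫ = ⟪P, P⟫ - 2 * ⟪P, P'⟫ + ⟪P', P'⟫ := by
    rw [inner_sub_left, inner_sub_right, inner_sub_right, real_inner_comm P P']; ring
  have e4 : ⟪P - P', x - x'⟫ = ⟪P, x⟫ - ⟪P, x'⟫ - ⟪P', x⟫ + ⟪P', x'⟫ := by
    simp [inner_sub_left, inner_sub_right]; ring
  have c1 : ⟪x, P'⟫ = ⟪P', x⟫ := real_inner_comm _ _
  have c2 : ⟪x, P⟫ = ⟪P, x⟫ := real_inner_comm _ _
  have c3 : ⟪x', P⟫ = ⟪P, x'⟫ := real_inner_comm _ _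
  have c4 : ⟪x', P'⟫ = ⟪P', x'⟫ := real_inner_comm _ _
  have c5 : ⟪P', P⟫ = ⟪P, P'⟫ := real_inner_comm _ _
  linarith

lemma Pproj_comp (lam : ℝ)
    (w : PiLp 2 (fun _ : Fin p => EuclideanSpace ℝ (Fin d))) (i : Fin p) :
    Pproj lam w i = Qproj 0 lam (w i) := by
  simp [Pproj, Qproj]

lemma Pproj_firm {lam : ℝ} (hlam : 0 ≤ lam)
    (x x' : PiLp 2 (fun _ : Fin p => EuclideanSpace ℝ (Fin d))) :
    ⟪Pproj lam x - Pproj lam x', Pproj lam x - Pproj lam x'⟫ ≤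
      ⟪Pproj lam x - Pproj lam x', x - x'⟫ := by
  rw [PiLp.inner_apply, PiLp.inner_apply]
  apply Finset.sum_le_sum
  intro i _
  have h1 : (Pproj lam x - Pproj lam x') i = Qproj 0 lam (x i) - Qproj 0 lam (x' i) := by
    simp [Pproj_comp]
  have h2 : (x - x') i = x i - x' i := rfl
  rw [h1, h2]
  exact Qproj_firm 0 hlam (x i) (x' i)

lemma normL_eq (K : U →L[ℝ] V) (L : U →L[ℝ] U)
    (hL : L.adjoint.comp L = ContinuousLinearMap.id ℝ _ - K.adjoint.comp K) (x : U) :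
    ‖L x‖ ^ 2 = ‖x‖ ^ 2 - ‖K x‖ ^ 2 := by
  have h2 : L.adjoint (L x) = x - K.adjoint (K x) := by
    have := DFunLike.congr_fun hL x
    simpa using this
  have h1 : ⟪L x, L x⟫ = ⟪x, x⟫ - ⟪K x, K x⟫ := by
    rw [← ContinuousLinearMap.adjoint_inner_left, h2, inner_sub_left,
      ContinuousLinearMap.adjoint_inner_left]
  rw [← real_inner_self_eq_norm_sq, ← real_inner_self_eq_norm_sq,
    ← real_inner_self_eq_norm_sq]
  exact h1

lemma normB_eq (A : U →L[ℝ] W) (B : W →L[ℝ] W)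
    (hB : B.adjoint.comp B = ContinuousLinearMap.id ℝ _ - A.comp A.adjoint) (x : W) :
    ‖B x‖ ^ 2 = ‖x‖ ^ 2 - ‖A.adjoint x‖ ^ 2 := by
  have h2 : B.adjoint (B x) = x - A (A.adjoint x) := by
    have := DFunLike.congr_fun hB x
    simpa using this
  have h1 : ⟪B x, B x⟫ = ⟪x, x⟫ - ⟪A.adjoint x, A.adjoint x⟫ := by
    rw [← ContinuousLinearMap.adjoint_inner_left, h2, inner_sub_left,
      ← ContinuousLinearMap.adjoint_inner_right]
  rw [← real_inner_self_eq_norm_sq, ← real_inner_self_eq_norm_sq,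
    ← real_inner_self_eq_norm_sq]
  exact h1

set_option maxHeartbeats 1000000 in
lemma key_step (K : U →L[ℝ] V) (A : U →L[ℝ] W) (L : U →L[ℝ] U) (B : W →L[ℝ] W)
    (hL : L.adjoint.comp L = ContinuousLinearMap.id ℝ _ - K.adjoint.comp K)
    (hB : B.adjoint.comp B = ContinuousLinearMap.id ℝ _ - A.comp A.adjoint)
    {θ : ℝ} (hθ0 : 0 < θ) (hθ1 : θ ≤ 1)
    (a a' ab' : U) (b b' : W) (c c' e e' : V)
    (hR2 : a' - a = -(K.adjoint (c + K a - e)) - A.adjoint b')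
    (hR12 : a' - ab' = A.adjoint (b - b'))
    (hR3 : ⟪b', b'⟫ ≤ ⟪b', b + A ab'⟫)
    (hR4 : ⟪e', e'⟫ ≤ ⟪e', K a' + c⟫)
    (hR5 : c' = c + θ • (K a' - e')) :
    ‖L a'‖ ^ 2 + ‖B b'‖ ^ 2 + θ⁻¹ * ‖c'‖ ^ 2 + ‖e'‖ ^ 2
      + (‖L (a' - a)‖ ^ 2 + ‖B (b' - b)‖ ^ 2 + ‖K a' - e‖ ^ 2)
      ≤ ‖L a‖ ^ 2 + ‖B b‖ ^ 2 + θ⁻¹ * ‖c‖ ^ 2 + ‖e‖ ^ 2 := by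
  rw [normL_eq K L hL, normL_eq K L hL, normL_eq K L hL,
    normB_eq A B hB, normB_eq A B hB, normB_eq A B hB]
  set s := K a' with hs
  have idu : ‖a'‖ ^ 2 + ‖a' - a‖ ^ 2 - ‖a‖ ^ 2 = 2 * ⟪a', a' - a⟫ := by
    have h := norm_sub_sq_real (x := a') (y := a)
    have h2 : ⟪a', a' - a⟫ = ‖a'‖ ^ 2 - ⟪a', a⟫ := by
      rw [inner_sub_right, real_inner_self_eq_norm_sq]
    linarith
  have idKu : ‖s‖ ^ 2 + ‖K (a' - a)‖ ^ 2 - ‖K a‖ ^ 2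
      = 2 * (‖s‖ ^ 2 - ⟪s, K a⟫) := by
    rw [map_sub]
    have h := norm_sub_sq_real (x := s) (y := K a)
    linarith
  have hinu : ⟪a', a' - a⟫ = -(⟪s, c⟫ + ⟪s, K a⟫ - ⟪s, e⟫) - ⟪A a', b'⟫ := by
    rw [hR2, inner_sub_right, inner_neg_right, ContinuousLinearMap.adjoint_inner_right,
      ContinuousLinearMap.adjoint_inner_right, inner_sub_right, inner_add_right]
  have idw : ‖b'‖ ^ 2 + ‖b' - b‖ ^ 2 - ‖b‖ ^ 2 = 2 * ⟪b', b' - b⟫ := by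
    have h := norm_sub_sq_real (x := b') (y := b)
    have h2 : ⟪b', b' - b⟫ = ‖b'‖ ^ 2 - ⟪b', b⟫ := by
      rw [inner_sub_right, real_inner_self_eq_norm_sq]
    linarith
  have idAw : ‖A.adjoint b'‖ ^ 2 + ‖A.adjoint (b' - b)‖ ^ 2 - ‖A.adjoint b‖ ^ 2
      = 2 * ⟪A.adjoint b', A.adjoint b' - A.adjoint b⟫ := by
    rw [map_sub]
    have h := norm_sub_sq_real (x := A.adjoint b') (y := A.adjoint b)
    have h2 : ⟪A.adjoint b', A.adjoint b' - A.adjoint b⟫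
        = ‖A.adjoint b'‖ ^ 2 - ⟪A.adjoint b', A.adjoint b⟫ := by
      rw [inner_sub_right, real_inner_self_eq_norm_sq]
    linarith
  have hinw : ⟪b', b' - b⟫ ≤ ⟪A a', b'⟫ + ⟪A.adjoint b', A.adjoint b' - A.adjoint b⟫ := by
    have hab : ab' = a' - A.adjoint (b - b') := by rw [← hR12]; abel
    have t1 : ⟪b', A ab'⟫ = ⟪A.adjoint b', ab'⟫ :=
      (ContinuousLinearMap.adjoint_inner_left A ab' b').symm
    have t2 : ⟪A.adjoint b', ab'⟫
        = ⟪A.adjoint b', a'⟫ - ⟪A.adjoint b', A.adjoint b - A.adjoint b'⟫ := by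
      rw [hab, map_sub, inner_sub_right]
    have t3 : ⟪A.adjoint b', a'⟫ = ⟪A a', b'⟫ := by
      rw [ContinuousLinearMap.adjoint_inner_left, real_inner_comm]
    have t4 : ⟪A.adjoint b', A.adjoint b - A.adjoint b'⟫
        = ⟪A.adjoint b', A.adjoint b⟫ - ⟪A.adjoint b', A.adjoint b'⟫ := inner_sub_right _ _ _
    have t5 : ⟪A.adjoint b', A.adjoint b' - A.adjoint b⟫
        = ⟪A.adjoint b', A.adjoint b'⟫ - ⟪A.adjoint b', A.adjoint b⟫ := inner_sub_right _ _ _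
    have h0 : ⟪b', b + A ab'⟫ = ⟪b', b⟫ + ⟪b', A ab'⟫ := inner_add_right _ _ _
    have h2 : ⟪b', b' - b⟫ = ⟪b', b'⟫ - ⟪b', b⟫ := inner_sub_right _ _ _
    linarith
  have hc2 : ‖c'‖ ^ 2 = ‖c‖ ^ 2 + 2 * θ * (⟪c, s⟫ - ⟪c, e'⟫) + θ ^ 2 * ‖s - e'‖ ^ 2 := by
    rw [hR5, norm_add_sq_real, real_inner_smul_right, inner_sub_right, norm_smul,
      Real.norm_eq_abs, abs_of_pos hθ0]
    ring
  have F5 : θ⁻¹ * ‖c'‖ ^ 2 = θ⁻¹ * ‖c‖ ^ 2 + 2 * (⟪c, s⟫ - ⟪c, e'⟫) + θ * ‖s - e'‖ ^ 2 := by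
    rw [hc2]; field_simp
  have F6 : ‖e'‖ ^ 2 ≤ ⟪e', s⟫ + ⟪e', c⟫ := by
    rw [← real_inner_self_eq_norm_sq]
    calc ⟪e', e'⟫ ≤ ⟪e', s + c⟫ := hR4
      _ = ⟪e', s⟫ + ⟪e', c⟫ := inner_add_right _ _ _
  have F7 : θ * ‖s - e'‖ ^ 2 ≤ ‖s - e'‖ ^ 2 := by nlinarith [sq_nonneg ‖s - e'‖]
  have E1 : ‖s - e‖ ^ 2 = ‖s‖ ^ 2 - 2 * ⟪s, e⟫ + ‖e‖ ^ 2 := norm_sub_sq_real _ _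
  have E2 : ‖s - e'‖ ^ 2 = ‖s‖ ^ 2 - 2 * ⟪s, e'⟫ + ‖e'‖ ^ 2 := norm_sub_sq_real _ _
  have c1 : ⟪c, s⟫ = ⟪s, c⟫ := real_inner_comm _ _
  have c2 : ⟪c, e'⟫ = ⟪e', c⟫ := real_inner_comm _ _
  have c3 : ⟪e', s⟫ = ⟪s, e'⟫ := real_inner_comm _ _
  linarith

end Aux

set_option maxHeartbeats 2000000 in
/-- Summed descent inequality: for every `M`, all partial sums (from `M`) of the series
`Σₙ (‖L(u^{n+1}−uⁿ)‖² + ‖B(w^{n+1}−wⁿ)‖² + ‖ẑ−zⁿ−K(û−u^{n+1})‖²)` are bounded above by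
`‖L(u^M−û)‖² + ‖B(w^M−ŵ)‖² + θ⁻¹‖v^M−v̂‖² + ‖z^M−ẑ‖²`. -/
theorem stmt6 {N m p d : ℕ}
    (K : EuclideanSpace ℝ (Fin N) →L[ℝ] EuclideanSpace ℝ (Fin m))
    (A : EuclideanSpace ℝ (Fin N) →L[ℝ] PiLp 2 (fun _ : Fin p => EuclideanSpace ℝ (Fin d)))
    (hK : ‖K‖ < 1) (hA : ‖A‖ < 1)
    (y : EuclideanSpace ℝ (Fin m)) (eps : ℝ) (heps : 0 ≤ eps) (mu : ℝ) (hmu : 0 < mu)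
    (θ : ℝ) (hθ0 : 0 < θ) (hθ1 : θ ≤ 1)
    (L : EuclideanSpace ℝ (Fin N) →L[ℝ] EuclideanSpace ℝ (Fin N))
    (B : PiLp 2 (fun _ : Fin p => EuclideanSpace ℝ (Fin d)) →L[ℝ]
      PiLp 2 (fun _ : Fin p => EuclideanSpace ℝ (Fin d)))
    (hLbij : Function.Bijective L) (hBbij : Function.Bijective B)
    (hL : L.adjoint.comp L = ContinuousLinearMap.id ℝ _ - K.adjoint.comp K)
    (hB : B.adjoint.comp B = ContinuousLinearMap.id ℝ _ - A.comp A.adjoint)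
    (u ubar : ℕ → EuclideanSpace ℝ (Fin N))
    (w : ℕ → PiLp 2 (fun _ : Fin p => EuclideanSpace ℝ (Fin d)))
    (v z : ℕ → EuclideanSpace ℝ (Fin m))
    (hubar : ∀ n, ubar (n + 1) = u n - K.adjoint (v n + K (u n) - z n) - A.adjoint (w n))
    (hw : ∀ n, w (n + 1) = Pproj mu (w n + A (ubar (n + 1))))
    (hu : ∀ n, u (n + 1) = u n - K.adjoint (v n + K (u n) - z n) - A.adjoint (w (n + 1)))
    (hz : ∀ n, z (n + 1) = Qproj y eps (K (u (n + 1)) + v n))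
    (hv : ∀ n, v (n + 1) = v n + θ • (K (u (n + 1)) - z (n + 1)))
    (uh : EuclideanSpace ℝ (Fin N))
    (wh : PiLp 2 (fun _ : Fin p => EuclideanSpace ℝ (Fin d)))
    (vh zh : EuclideanSpace ℝ (Fin m))
    (hfw : wh = Pproj mu (wh + A uh))
    (hfu : K.adjoint (vh + K uh - zh) + A.adjoint wh = 0)
    (hfz : zh = Qproj y eps (K uh + vh))
    (hfv : K uh = zh)
    :
    ∀ M Nend : ℕ,
      ∑ n ∈ Finset.Ico M Nend,
          (‖L (u (n + 1) - u n)‖ ^ 2 + ‖B (w (n + 1) - w n)‖ ^ 2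
            + ‖zh - z n - K (uh - u (n + 1))‖ ^ 2) ≤
        ‖L (u M - uh)‖ ^ 2 + ‖B (w M - wh)‖ ^ 2 + θ⁻¹ * ‖v M - vh‖ ^ 2 + ‖z M - zh‖ ^ 2 := by
  set E : ℕ → ℝ := fun n =>
    ‖L (u n - uh)‖ ^ 2 + ‖B (w n - wh)‖ ^ 2 + θ⁻¹ * ‖v n - vh‖ ^ 2 + ‖z n - zh‖ ^ 2 with hE
  set T : ℕ → ℝ := fun n =>
    ‖L (u (n + 1) - u n)‖ ^ 2 + ‖B (w (n + 1) - w n)‖ ^ 2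
      + ‖zh - z n - K (uh - u (n + 1))‖ ^ 2 with hT
  have hEnonneg : ∀ n, 0 ≤ E n := by
    intro n
    have : 0 ≤ θ⁻¹ * ‖v n - vh‖ ^ 2 :=
      mul_nonneg (inv_nonneg.2 hθ0.le) (sq_nonneg _)
    have h1 := sq_nonneg ‖L (u n - uh)‖
    have h2 := sq_nonneg ‖B (w n - wh)‖
    have h3 := sq_nonneg ‖z n - zh‖
    simp only [hE]
    positivity
  have hfu' : A.adjoint wh = -(K.adjoint (vh + K uh - zh)) :=
    eq_neg_of_add_eq_zero_right hfu
  have step : ∀ n, T n + E (n + 1) ≤ E n := by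
    intro n
    have hR2 : (u (n + 1) - uh) - (u n - uh)
        = -(K.adjoint ((v n - vh) + K (u n - uh) - (z n - zh)))
          - A.adjoint (w (n + 1) - wh) := by
      simp only [hu n, map_sub, map_add, hfu']
      abel
    have hR12 : (u (n + 1) - uh) - (ubar (n + 1) - uh)
        = A.adjoint ((w n - wh) - (w (n + 1) - wh)) := by
      simp only [hu n, hubar n, map_sub, map_add]
      abel
    have hR3 : ⟪w (n + 1) - wh, w (n + 1) - wh⟫
        ≤ ⟪w (n + 1) - wh, (w n - wh) + A (ubar (n + 1) - uh)⟫ := by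
      have harg : (w n + A (ubar (n + 1))) - (wh + A uh)
          = (w n - wh) + A (ubar (n + 1) - uh) := by
        rw [map_sub]; abel
      have h := Pproj_firm hmu.le (w n + A (ubar (n + 1))) (wh + A uh)
      rw [← hw n, ← hfw, harg] at h
      exact h
    have hR4 : ⟪z (n + 1) - zh, z (n + 1) - zh⟫
        ≤ ⟪z (n + 1) - zh, K (u (n + 1) - uh) + (v n - vh)⟫ := by
      have harg : (K (u (n + 1)) + v n) - (K uh + vh)
          = K (u (n + 1) - uh) + (v n - vh) := by
        rw [map_sub]; abel
      have h := Qproj_firm y heps (K (u (n + 1)) + v n) (K uh + vh)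
      rw [← hz n, ← hfz, harg] at h
      exact h
    have hR5 : v (n + 1) - vh
        = (v n - vh) + θ • (K (u (n + 1) - uh) - (z (n + 1) - zh)) := by
      simp only [hv n, map_sub, hfv]
      module
    have key := key_step K A L B hL hB hθ0 hθ1
      (u n - uh) (u (n + 1) - uh) (ubar (n + 1) - uh)
      (w n - wh) (w (n + 1) - wh)
      (v n - vh) (v (n + 1) - vh) (z n - zh) (z (n + 1) - zh)
      hR2 hR12 hR3 hR4 hR5
    have h1 : (u (n + 1) - uh) - (u n - uh) = u (n + 1) - u n := by abel
    have h2 : (w (n + 1) - wh) - (w n - wh) = w (n + 1) - w n := by abel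
    have h3 : K (u (n + 1) - uh) - (z n - zh) = zh - z n - K (uh - u (n + 1)) := by
      rw [map_sub, map_sub]; abel
    rw [h1, h2, h3] at key
    simp only [hE, hT]
    linarith
  have main : ∀ M Nend : ℕ,
      ∑ n ∈ Finset.Ico M Nend, T n ≤ E M - E (max M Nend) := by
    intro M Nend
    induction Nend with
    | zero =>
      rw [Finset.Ico_eq_empty (by omega), Finset.sum_empty]
      simp
    | succ n ih =>
      by_cases h : M ≤ n
      · rw [Finset.sum_Ico_succ_top h]
        have hmax1 : max M n = n := by omega
        have hmax2 : max M (n + 1) = n + 1 := by omega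
        rw [hmax1] at ih
        rw [hmax2]
        linarith [step n]
      · rw [Finset.Ico_eq_empty (by omega), Finset.sum_empty]
        have hmax : max M (n + 1) = M := by omega
        rw [hmax]
        simp
  intro M Nend
  calc ∑ n ∈ Finset.Ico M Nend,
        (‖L (u (n + 1) - u n)‖ ^ 2 + ‖B (w (n + 1) - w n)‖ ^ 2
          + ‖zh - z n - K (uh - u (n + 1))‖ ^ 2)
      = ∑ n ∈ Finset.Ico M Nend, T n := rfl
    _ ≤ E M - E (max M Nend) := main M Nend
    _ ≤ E M := by linarith [hEnonneg (max M Nend)]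
    _ = ‖L (u M - uh)‖ ^ 2 + ‖B (w M - wh)‖ ^ 2 + θ⁻¹ * ‖v M - vh‖ ^ 2
        + ‖z M - zh‖ ^ 2 := rfl
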